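/- Assume the set of Matchings generated by D₁ and D₂ is infinite. Then the closure of E equals K₁+K₂, where E = { Σ_{k=1}^{∞} c_k β^{-k} : (c_k)_{k≥1} is an infinite concatenation of Matchings }. -/

import Mathlib

open Finset Pointwise

/-- The block `(0,…,0, β^k * a)` of length `k` associated to the similitude
`x ↦ x/β^k + a`. -/
noncomputable def digitBlock (β : ℝ) (k : ℕ) (a : ℝ) : List ℝ :=
  List.replicate (k - 1) 0 ++ [β ^ k * a]

/-- `w` is a Matching generated by the digital sets `P` and `Q`: it is the coordinatewise
sum of a concatenation of blocks from `P` and a concatenation of blocks from `Q`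
having the same total length as `w`. -/
def IsMatching {n m : ℕ} (P : Fin n → List ℝ) (Q : Fin m → List ℝ) (w : List ℝ) : Prop :=
  ∃ (is : List (Fin n)) (js : List (Fin m)),
    is ≠ [] ∧ js ≠ [] ∧
    (is.map P).flatten.length = w.length ∧
    (js.map Q).flatten.length = w.length ∧
    w = List.zipWith (· + ·) (is.map P).flatten (js.map Q).flatten

/-- A Matching is primitive if it is not a concatenation of two or more shorter Matchings. -/
def IsPrimMatching {n m : ℕ} (P : Fin n → List ℝ) (Q : Fin m → List ℝ) (w : List ℝ) : Prop :=
  IsMatching P Q w ∧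
    ¬ ∃ u v : List ℝ, u ≠ [] ∧ v ≠ [] ∧ IsMatching P Q u ∧ IsMatching P Q v ∧ w = u ++ v

/-- The value `Σ_{i=1}^{L} c_i β^{-i}` of the block `w = (c_1,…,c_L)` in base `β`. -/
noncomputable def blockVal (β : ℝ) (w : List ℝ) : ℝ :=
  ∑ i : Fin w.length, w.get i / β ^ (i.1 + 1)

/-- The similitude `φ_w(x) = x/β^{|w|} + Σ_i c_i β^{-i}` associated to a block `w`. -/
noncomputable def phiBlock (β : ℝ) (w : List ℝ) (x : ℝ) : ℝ :=
  x / β ^ w.length + blockVal β w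

/-- `x : ℕ → ℝ` (indexed from 0, representing `(x_k)_{k ≥ 1}`) is the infinite
concatenation of the nonempty blocks `W 0, W 1, …`. -/
def IsConcatSeq (W : ℕ → List ℝ) (x : ℕ → ℝ) : Prop :=
  (∀ t, W t ≠ []) ∧
    ∀ (t : ℕ) (i : Fin (W t).length),
      x ((∑ s ∈ Finset.range t, (W s).length) + i) = (W t).get i

/-- `x` is an infinite concatenation of blocks from the family `Ws`. -/
def IsInfConcatFrom (Ws : Set (List ℝ)) (x : ℕ → ℝ) : Prop :=
  ∃ W : ℕ → List ℝ, (∀ t, W t ∈ Ws) ∧ IsConcatSeq W x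

/-- The value `Σ_{k=1}^{∞} x_k β^{-k}` of a sequence (indexed from 0). -/
noncomputable def seqVal (β : ℝ) (x : ℕ → ℝ) : ℝ :=
  ∑' k : ℕ, x k / β ^ (k + 1)

/-- The set `E` of values of infinite concatenations of Matchings. -/
def Eset {n m : ℕ} (β : ℝ) (P : Fin n → List ℝ) (Q : Fin m → List ℝ) : Set ℝ :=
  {z | ∃ x : ℕ → ℝ, IsInfConcatFrom {w | IsMatching P Q w} x ∧ z = seqVal β x}

/-- `a` is a coding: the coordinatewise sum of an infinite concatenation of blocks from
`P` and an infinite concatenation of blocks from `Q`. -/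
def IsCoding {n m : ℕ} (P : Fin n → List ℝ) (Q : Fin m → List ℝ) (a : ℕ → ℝ) : Prop :=
  ∃ x y : ℕ → ℝ, IsInfConcatFrom (Set.range P) x ∧ IsInfConcatFrom (Set.range Q) y ∧
    ∀ k, a k = x k + y k

/-- The set `C` of codings having a tail containing no segment that is a Matching. -/
def Cset {n m : ℕ} (P : Fin n → List ℝ) (Q : Fin m → List ℝ) : Set (ℕ → ℝ) :=
  {a | IsCoding P Q a ∧
    ∃ N : ℕ, ∀ j ≥ N, ∀ l : ℕ, 1 ≤ l →
      ¬ IsMatching P Q (List.ofFn fun i : Fin l => a (j + i))}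

lemma my_getD_append (U V : List ℝ) (k : ℕ) (h : k < U.length) :
    (U ++ V).getD k 0 = U.getD k 0 := by
  unfold List.getD
  rw [List.getElem?_append_left h]

lemma my_getD_append_right (U V : List ℝ) (k : ℕ) (h : U.length ≤ k) :
    (U ++ V).getD k 0 = V.getD (k - U.length) 0 := by
  unfold List.getD
  rw [List.getElem?_append_right h]

lemma blockVal_eq_sum_range (β : ℝ) (w : List ℝ) :
    blockVal β w = ∑ k ∈ Finset.range w.length, w.getD k 0 / β ^ (k+1) := by
  rw [blockVal, Finset.sum_range fun k => w.getD k 0 / β^(k+1)]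
  apply Finset.sum_congr rfl
  intro i _
  rw [List.getD_eq_getElem w 0 i.isLt]
  rfl

lemma blockVal_nil (β : ℝ) : blockVal β ([] : List ℝ) = 0 := by
  simp [blockVal]

lemma blockVal_append (β : ℝ) (hβ : 1 < β) (U V : List ℝ) :
    blockVal β (U ++ V) = blockVal β U + blockVal β V / β ^ U.length := by
  have hβ0 : (0:ℝ) < β := lt_trans one_pos hβ
  rw [blockVal_eq_sum_range, blockVal_eq_sum_range, blockVal_eq_sum_range,
    List.length_append, Finset.sum_range_add]
  congr 1
  · exact Finset.sum_congr rfl fun k hk => by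
      rw [my_getD_append U V k (Finset.mem_range.mp hk)]
  · rw [Finset.sum_div]
    apply Finset.sum_congr rfl
    intro k _
    rw [my_getD_append_right U V (U.length + k) (Nat.le_add_right _ _),
      Nat.add_sub_cancel_left, div_div, ← pow_add]
    congr 2
    omega

lemma blockVal_digitBlock (β : ℝ) (hβ : 1 < β) (k : ℕ) (hk : 0 < k) (c : ℝ) :
    blockVal β (digitBlock β k c) = c := by
  have hβ0 : (0:ℝ) < β := lt_trans one_pos hβ
  have hrep : blockVal β (List.replicate (k-1) (0:ℝ)) = 0 := by
    rw [blockVal_eq_sum_range]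
    apply Finset.sum_eq_zero
    intro i hi
    rw [List.getD_eq_getElem _ _ (by simpa using Finset.mem_range.mp hi)]
    simp
  rw [digitBlock, blockVal_append β hβ, hrep, blockVal_eq_sum_range]
  simp only [List.length_replicate, List.length_singleton]
  rw [Finset.sum_range_one]
  simp only [List.getD_cons_zero, zero_add, pow_one]
  rw [div_div, ← pow_succ', Nat.sub_add_cancel hk]
  field_simp

lemma blockVal_zipWith_add (β : ℝ) (U V : List ℝ) (h : U.length = V.length) :
    blockVal β (List.zipWith (· + ·) U V) = blockVal β U + blockVal β V := by
  have hlen : (List.zipWith (· + ·) U V).length = U.length := by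
    rw [List.length_zipWith, h, Nat.min_self]
  rw [blockVal_eq_sum_range, blockVal_eq_sum_range, blockVal_eq_sum_range, hlen, ← h,
    ← Finset.sum_add_distrib]
  apply Finset.sum_congr rfl
  intro k hk
  have hk1 : k < U.length := Finset.mem_range.mp hk
  have hk2 : k < V.length := h ▸ hk1
  rw [List.getD_eq_getElem _ _ (by rw [hlen]; exact hk1), List.getElem_zipWith,
    List.getD_eq_getElem _ _ hk1, List.getD_eq_getElem _ _ hk2, add_div]

lemma geom_sum_range_le (β : ℝ) (hβ : 1 < β) (L : ℕ) :
    ∑ k ∈ Finset.range L, (1/β) ^ k ≤ 1/(1-1/β) := by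
  have hβ0 : (0:ℝ) < β := lt_trans one_pos hβ
  have hr0 : (0:ℝ) ≤ 1/β := by positivity
  have hr1 : 1/β < 1 := by rw [div_lt_one hβ0]; exact hβ
  have h2 := Summable.sum_le_tsum (Finset.range L) (fun i _ => pow_nonneg hr0 i)
    (summable_geometric_of_lt_one hr0 hr1)
  rwa [tsum_geometric_of_lt_one hr0 hr1, ← one_div] at h2

lemma blockVal_abs_le (β : ℝ) (hβ : 1 < β) (w : List ℝ) (M : ℝ) (hM : 0 ≤ M)
    (hw : ∀ c ∈ w, |c| ≤ M) : |blockVal β w| ≤ M / (β - 1) := by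
  have hβ0 : (0:ℝ) < β := lt_trans one_pos hβ
  have hb1 : (0:ℝ) < β - 1 := by linarith
  rw [blockVal_eq_sum_range]
  calc |∑ k ∈ Finset.range w.length, w.getD k 0 / β ^ (k+1)|
      ≤ ∑ k ∈ Finset.range w.length, |w.getD k 0 / β ^ (k+1)| :=
        Finset.abs_sum_le_sum_abs _ _
    _ ≤ ∑ k ∈ Finset.range w.length, M * (1/β) ^ (k+1) := by
        apply Finset.sum_le_sum
        intro k hk
        have hklt := Finset.mem_range.mp hk
        rw [List.getD_eq_getElem _ _ hklt, abs_div, abs_pow, abs_of_pos hβ0,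
          div_pow, one_pow, mul_one_div]
        gcongr
        exact hw _ (w.getElem_mem hklt)
    _ = (M * (1/β)) * ∑ k ∈ Finset.range w.length, (1/β) ^ k := by
        rw [Finset.mul_sum]
        exact Finset.sum_congr rfl fun k _ => by rw [pow_succ']; ring
    _ ≤ (M * (1/β)) * (1/(1-1/β)) := by
        apply mul_le_mul_of_nonneg_left (geom_sum_range_le β hβ _) (by positivity)
    _ = M / (β - 1) := by
        rw [one_sub_div (ne_of_gt hβ0)]
        field_simp
lemma aux_div_pow (β : ℝ) (hβ0 : (0:ℝ) < β) (M : ℝ) (a b : ℕ) :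
    (M * (1/β)^a) * (1/β)^b = M / β^(a+b) := by
  rw [div_pow, div_pow, one_pow, one_pow, mul_one_div, mul_one_div, div_div, ← pow_add]

lemma seqVal_summable (β : ℝ) (hβ : 1 < β) (x : ℕ → ℝ) (M : ℝ) (hx : ∀ k, |x k| ≤ M) :
    Summable (fun k => x k / β ^ (k+1)) := by
  have hβ0 : (0:ℝ) < β := lt_trans one_pos hβ
  have hr0 : (0:ℝ) ≤ 1/β := by positivity
  have hr1 : 1/β < 1 := by rw [div_lt_one hβ0]; exact hβ
  apply Summable.of_norm_bounded (g := fun k => (M * (1/β)^1) * (1/β)^k)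
    ((summable_geometric_of_lt_one hr0 hr1).mul_left _)
  intro k
  rw [Real.norm_eq_abs, abs_div, abs_pow, abs_of_pos hβ0]
  calc |x k| / β ^ (k+1) ≤ M / β ^ (k+1) := by
        gcongr; exact hx k
    _ = (M * (1/β)^1) * (1/β)^k := by
        rw [aux_div_pow β hβ0 M 1 k, Nat.add_comm 1 k]

lemma seqVal_trunc (β : ℝ) (hβ : 1 < β) (x : ℕ → ℝ) (M : ℝ) (hM : 0 ≤ M)
    (hx : ∀ k, |x k| ≤ M) (t : ℕ) :
    |seqVal β x - ∑ k ∈ Finset.range t, x k / β ^ (k+1)| ≤ M / (β-1) * (1/β)^t := by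
  have hβ0 : (0:ℝ) < β := lt_trans one_pos hβ
  have hb1 : (0:ℝ) < β - 1 := by linarith
  have hr0 : (0:ℝ) ≤ 1/β := by positivity
  have hr1 : 1/β < 1 := by rw [div_lt_one hβ0]; exact hβ
  have hsum := seqVal_summable β hβ x M hx
  have hsplit := Summable.sum_add_tsum_nat_add t hsum
  have heq : seqVal β x - ∑ k ∈ Finset.range t, x k / β ^ (k+1)
      = ∑' i : ℕ, x (i + t) / β ^ ((i + t) + 1) := by
    rw [seqVal, ← hsplit]; ring
  rw [heq]
  have hgs : HasSum (fun i : ℕ => (M * (1/β)^(t+1)) * (1/β)^i)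
      ((M * (1/β)^(t+1)) * (1 - 1/β)⁻¹) :=
    (hasSum_geometric_of_lt_one hr0 hr1).mul_left _
  have hbnd : ∀ i : ℕ, ‖x (i + t) / β ^ ((i + t) + 1)‖ ≤ (M * (1/β)^(t+1)) * (1/β)^i := by
    intro i
    rw [Real.norm_eq_abs, abs_div, abs_pow, abs_of_pos hβ0]
    calc |x (i+t)| / β ^ ((i+t)+1) ≤ M / β ^ ((i+t)+1) := by gcongr; exact hx _
      _ = (M * (1/β)^(t+1)) * (1/β)^i := by
          rw [aux_div_pow β hβ0 M (t+1) i]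
          ring_nf
  have := tsum_of_norm_bounded hgs hbnd
  rw [Real.norm_eq_abs] at this
  refine this.trans (le_of_eq ?_)
  rw [one_sub_div (ne_of_gt hβ0), div_pow, one_pow, pow_succ]
  field_simp
  ring_nf
  rw [inv_pow, mul_assoc, mul_inv_cancel₀ (pow_ne_zero _ hβ0.ne'), mul_one]

def prefixFlat (W : ℕ → List ℝ) (t : ℕ) : List ℝ := ((List.range t).map W).flatten

lemma prefixFlat_zero (W : ℕ → List ℝ) : prefixFlat W 0 = [] := rfl

lemma prefixFlat_succ (W : ℕ → List ℝ) (t : ℕ) :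
    prefixFlat W (t+1) = prefixFlat W t ++ W t := by
  simp [prefixFlat, List.range_succ]

lemma prefixFlat_length (W : ℕ → List ℝ) (t : ℕ) :
    (prefixFlat W t).length = ∑ s ∈ Finset.range t, (W s).length := by
  induction t with
  | zero => simp [prefixFlat_zero]
  | succ t ih => rw [prefixFlat_succ, List.length_append, ih, Finset.sum_range_succ]

lemma prefixFlat_length_ge (W : ℕ → List ℝ) (hW : ∀ t, W t ≠ []) (t : ℕ) :
    t ≤ (prefixFlat W t).length := by
  induction t with
  | zero => simp
  | succ t ih =>
      rw [prefixFlat_succ, List.length_append]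
      have := List.length_pos_iff.mpr (hW t)
      omega

lemma concat_partial (β : ℝ) (hβ : 1 < β) (W : ℕ → List ℝ) (x : ℕ → ℝ)
    (hW : IsConcatSeq W x) (t : ℕ) :
    ∑ k ∈ Finset.range ((prefixFlat W t).length), x k / β ^ (k+1)
      = blockVal β (prefixFlat W t) := by
  induction t with
  | zero => simp [prefixFlat_zero, blockVal_nil]
  | succ t ih =>
      rw [prefixFlat_succ, List.length_append, Finset.sum_range_add, ih,
        blockVal_append β hβ]
      congr 1
      rw [blockVal_eq_sum_range, Finset.sum_div]
      apply Finset.sum_congr rfl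
      intro i hi
      have hilt : i < (W t).length := Finset.mem_range.mp hi
      have hx := hW.2 t ⟨i, hilt⟩
      rw [prefixFlat_length]
      simp only at hx
      rw [hx]
      rw [List.getD_eq_getElem _ _ hilt]
      rw [div_div, ← pow_add]
      have he : (i+1) + (∑ s ∈ Finset.range t, (W s).length)
          = (∑ s ∈ Finset.range t, (W s).length) + i + 1 := by omega
      rw [he]
      show (W t).get ⟨i, hilt⟩ / _ = _
      rw [List.get_eq_getElem]

lemma concat_digit_bound (W : ℕ → List ℝ) (x : ℕ → ℝ) (hW : IsConcatSeq W x)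
    (M : ℝ) (hd : ∀ t, ∀ c ∈ W t, |c| ≤ M) : ∀ k, |x k| ≤ M := by
  intro k
  set T : ℕ → ℕ := fun t => ∑ s ∈ Finset.range t, (W s).length with hT
  have hTmono : ∀ t, T t + 1 ≤ T (t+1) := by
    intro t
    have := List.length_pos_iff.mpr (hW.1 t)
    rw [hT]
    simp only [Finset.sum_range_succ]
    omega
  have hTt : ∀ t, t ≤ T t := by
    intro t
    induction t with
    | zero => simp
    | succ t ih => have := hTmono t; omega
  have hP0 : T 0 ≤ k := by simp [hT]
  set t := Nat.findGreatest (fun t => T t ≤ k) (k+1) with ht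
  have hPt : T t ≤ k :=
    Nat.findGreatest_spec (P := fun t => T t ≤ k) (m := 0) (Nat.zero_le _) hP0
  have htle : t ≤ k := le_trans (hTt t) hPt
  have hnext : ¬ (T (t+1) ≤ k) :=
    Nat.findGreatest_is_greatest (P := fun t => T t ≤ k) (n := k+1) (k := t+1)
      (by omega) (by omega)
  have hTsucc : T (t+1) = T t + (W t).length := by
    rw [hT]; simp [Finset.sum_range_succ]
  have hilt : k - T t < (W t).length := by omega
  have hx := hW.2 t ⟨k - T t, hilt⟩
  simp only at hx
  have hk : T t + (k - T t) = k := by omega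
  rw [hk] at hx
  rw [hx, List.get_eq_getElem]
  exact hd t _ (List.getElem_mem hilt)
lemma digitBlock_length (β : ℝ) (k : ℕ) (hk : 0 < k) (c : ℝ) :
    (digitBlock β k c).length = k := by
  simp only [digitBlock, List.length_append, List.length_replicate, List.length_singleton]
  omega

lemma digitBlock_mem (β : ℝ) (k : ℕ) (c d : ℝ) (hd : d ∈ digitBlock β k c) :
    d = 0 ∨ d = β ^ k * c := by
  rcases List.mem_append.mp hd with h | h
  · exact Or.inl (List.eq_of_mem_replicate h)
  · simp only [List.mem_singleton] at h; exact Or.inr h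

lemma digit_abs_le (β : ℝ) {N : ℕ} (hN : 0 < N) (nv : Fin N → ℕ) (a : Fin N → ℝ) :
    ∃ M : ℝ, 0 ≤ M ∧ ∀ i : Fin N, ∀ d ∈ digitBlock β (nv i) (a i), |d| ≤ M := by
  have hne : (Finset.univ : Finset (Fin N)).Nonempty := ⟨⟨0, hN⟩, Finset.mem_univ _⟩
  refine ⟨Finset.univ.sup' hne (fun i => |β ^ nv i * a i|), ?_, ?_⟩
  · exact le_trans (abs_nonneg (β ^ nv ⟨0, hN⟩ * a ⟨0, hN⟩))
      (Finset.le_sup' (fun i => |β ^ nv i * a i|) (Finset.mem_univ ⟨0, hN⟩))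
  · intro i d hd
    rcases digitBlock_mem β _ _ _ hd with h | h
    · rw [h, abs_zero]
      exact le_trans (abs_nonneg (β ^ nv ⟨0, hN⟩ * a ⟨0, hN⟩))
        (Finset.le_sup' (fun i => |β ^ nv i * a i|) (Finset.mem_univ ⟨0, hN⟩))
    · rw [h]
      exact Finset.le_sup' (fun i => |β ^ nv i * a i|) (Finset.mem_univ i)

lemma flatten_digit_abs_le {N : ℕ} (Pf : Fin N → List ℝ) (M : ℝ)
    (hM : ∀ i : Fin N, ∀ d ∈ Pf i, |d| ≤ M) (isl : List (Fin N)) :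
    ∀ d ∈ ((isl.map Pf).flatten), |d| ≤ M := by
  intro d hd
  obtain ⟨l, hl, hdl⟩ := List.mem_flatten.mp hd
  obtain ⟨i, _, rfl⟩ := List.mem_map.mp hl
  exact hM i d hdl

lemma mem_K_of_blocks (β : ℝ) (hβ : 1 < β) {N : ℕ} (nv : Fin N → ℕ) (hnv : ∀ i, 0 < nv i)
    (a : Fin N → ℝ) (K : Set ℝ)
    (hK : K = ⋃ i, (fun x => x / β ^ nv i + a i) '' K)
    (isl : List (Fin N)) (c : ℝ) (hc : c ∈ K) :
    blockVal β ((isl.map fun i => digitBlock β (nv i) (a i)).flatten)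
      + c / β ^ ((isl.map fun i => digitBlock β (nv i) (a i)).flatten).length ∈ K := by
  have hβ0 : (0:ℝ) < β := lt_trans one_pos hβ
  have hβne : β ≠ 0 := ne_of_gt hβ0
  induction isl with
  | nil => simpa [blockVal_nil] using hc
  | cons i tl ih =>
      simp only [List.map_cons, List.flatten_cons]
      rw [blockVal_append β hβ, blockVal_digitBlock β hβ _ (hnv i),
        digitBlock_length β _ (hnv i), List.length_append, digitBlock_length β _ (hnv i)]
      rw [hK]
      refine Set.mem_iUnion.mpr ⟨i, ⟨_, ih, ?_⟩⟩
      show (blockVal β _ + c / β ^ _) / β ^ nv i + a i = _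
      rw [pow_add, add_div, div_div]
      ring

lemma exists_code (β : ℝ) (hβ : 1 < β) {N : ℕ} (nv : Fin N → ℕ) (hnv : ∀ i, 0 < nv i)
    (a : Fin N → ℝ) (K : Set ℝ)
    (hK : K = ⋃ i, (fun x => x / β ^ nv i + a i) '' K)
    (p : ℝ) (hp : p ∈ K) (t : ℕ) :
    ∃ isl : List (Fin N), isl.length = t ∧ ∃ p' ∈ K,
      p = blockVal β ((isl.map fun i => digitBlock β (nv i) (a i)).flatten)
        + p' / β ^ ((isl.map fun i => digitBlock β (nv i) (a i)).flatten).length := by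
  have hβ0 : (0:ℝ) < β := lt_trans one_pos hβ
  have hβne : β ≠ 0 := ne_of_gt hβ0
  induction t with
  | zero => exact ⟨[], rfl, p, hp, by simp [blockVal_nil]⟩
  | succ t ih =>
      obtain ⟨isl, hlen, p', hp', heq⟩ := ih
      rw [hK] at hp'
      obtain ⟨i, hi⟩ := Set.mem_iUnion.mp hp'
      obtain ⟨p'', hp'', hval⟩ := hi
      refine ⟨isl ++ [i], by simp [hlen], p'', hp'', ?_⟩
      simp only [List.map_append, List.flatten_append, List.map_cons, List.map_nil,
        List.flatten_cons, List.flatten_nil, List.append_nil]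
      rw [blockVal_append β hβ, blockVal_digitBlock β hβ _ (hnv i),
        List.length_append, digitBlock_length β _ (hnv i), heq, ← hval]
      simp only
      rw [pow_add, add_div, div_div]
      ring

lemma code_length_ge {N : ℕ} (β : ℝ) (nv : Fin N → ℕ) (hnv : ∀ i, 0 < nv i) (a : Fin N → ℝ)
    (isl : List (Fin N)) :
    isl.length ≤ ((isl.map fun i => digitBlock β (nv i) (a i)).flatten).length := by
  induction isl with
  | nil => simp
  | cons i tl ih =>
      simp only [List.map_cons, List.flatten_cons, List.length_append, List.length_cons,
        digitBlock_length β _ (hnv i)]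
      have := hnv i
      omega

lemma flatten_replicate_length {α : Type*} (k : ℕ) (U : List α) :
    ((List.replicate k U).flatten).length = k * U.length := by
  induction k with
  | zero => simp
  | succ k ih => simp [List.replicate_succ, ih, Nat.succ_mul]; ring

lemma flatten_replicate_mem {α : Type*} (k : ℕ) (U : List α) (d : α)
    (hd : d ∈ (List.replicate k U).flatten) : d ∈ U := by
  obtain ⟨l, hl, hdl⟩ := List.mem_flatten.mp hd
  rwa [List.eq_of_mem_replicate hl] at hdl

lemma flatten_map_replicate {N : ℕ} (Pf : Fin N → List ℝ) (isl : List (Fin N)) (k : ℕ) :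
    ((((List.replicate k isl).flatten).map Pf).flatten)
      = (List.replicate k ((isl.map Pf).flatten)).flatten := by
  induction k with
  | zero => simp
  | succ k ih =>
      rw [List.replicate_succ, List.flatten_cons, List.map_append, List.flatten_append, ih,
        List.replicate_succ, List.flatten_cons]

lemma matching_concat_decomp {n m : ℕ} (P : Fin n → List ℝ) (Q : Fin m → List ℝ)
    (W : ℕ → List ℝ) (hW : ∀ t, IsMatching P Q (W t)) (t : ℕ) :
    ∃ (Is : List (Fin n)) (Js : List (Fin m)),
      ((Is.map P).flatten).length = (prefixFlat W t).length ∧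
      ((Js.map Q).flatten).length = (prefixFlat W t).length ∧
      prefixFlat W t = List.zipWith (· + ·) (Is.map P).flatten (Js.map Q).flatten := by
  induction t with
  | zero => exact ⟨[], [], by simp [prefixFlat_zero], by simp [prefixFlat_zero],
      by simp [prefixFlat_zero]⟩
  | succ t ih =>
      obtain ⟨Is, Js, h1, h2, h3⟩ := ih
      obtain ⟨isl, jsl, _, _, g1, g2, g3⟩ := hW t
      refine ⟨Is ++ isl, Js ++ jsl, ?_, ?_, ?_⟩
      · simp only [List.map_append, List.flatten_append, List.length_append, prefixFlat_succ]
        omega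
      · simp only [List.map_append, List.flatten_append, List.length_append, prefixFlat_succ]
        omega
      · rw [prefixFlat_succ]
        simp only [List.map_append, List.flatten_append]
        rw [List.zipWith_append (h1.trans h2.symm), ← h3, ← g3]

lemma matching_digit_le {n m : ℕ} (P : Fin n → List ℝ) (Q : Fin m → List ℝ)
    (M1 M2 : ℝ) (hM1 : ∀ i, ∀ d ∈ P i, |d| ≤ M1) (hM2 : ∀ j, ∀ d ∈ Q j, |d| ≤ M2)
    (w : List ℝ) (hw : IsMatching P Q w) : ∀ c ∈ w, |c| ≤ M1 + M2 := by
  obtain ⟨isl, jsl, _, _, g1, g2, g3⟩ := hw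
  intro c hc
  obtain ⟨k, hk, rfl⟩ := List.mem_iff_getElem.mp hc
  have hzl := List.getElem_of_eq g3 hk
  rw [hzl, List.getElem_zipWith]
  exact (abs_add_le _ _).trans (add_le_add
    (flatten_digit_abs_le P M1 hM1 isl _ (List.getElem_mem _))
    (flatten_digit_abs_le Q M2 hM2 jsl _ (List.getElem_mem _)))
lemma Eset_subset_sum (β : ℝ) (hβ : 1 < β) {n m : ℕ} (hn : 0 < n) (hm : 0 < m)
    (nv : Fin n → ℕ) (hnv : ∀ i, 0 < nv i) (a : Fin n → ℝ)
    (mv : Fin m → ℕ) (hmv : ∀ j, 0 < mv j) (b : Fin m → ℝ)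
    (K₁ K₂ : Set ℝ) (hK₁ne : K₁.Nonempty) (hK₁c : IsCompact K₁)
    (hK₁ : K₁ = ⋃ i : Fin n, (fun x => x / β ^ nv i + a i) '' K₁)
    (hK₂ne : K₂.Nonempty) (hK₂c : IsCompact K₂)
    (hK₂ : K₂ = ⋃ j : Fin m, (fun x => x / β ^ mv j + b j) '' K₂) :
    Eset β (fun i => digitBlock β (nv i) (a i)) (fun j => digitBlock β (mv j) (b j))
      ⊆ K₁ + K₂ := by
  have hβ0 : (0:ℝ) < β := lt_trans one_pos hβ
  have hb1 : (0:ℝ) < β - 1 := by linarith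
  have hr0 : (0:ℝ) ≤ 1/β := by positivity
  have hr1 : 1/β < 1 := by rw [div_lt_one hβ0]; exact hβ
  set P : Fin n → List ℝ := fun i => digitBlock β (nv i) (a i) with hPdef
  set Q : Fin m → List ℝ := fun j => digitBlock β (mv j) (b j) with hQdef
  intro z hz
  obtain ⟨x, ⟨W, hWm, hWc⟩, rfl⟩ := hz
  obtain ⟨M1, hM1n, hM1⟩ := digit_abs_le β hn nv a
  obtain ⟨M2, hM2n, hM2⟩ := digit_abs_le β hm mv b
  have hwd : ∀ t, ∀ c ∈ W t, |c| ≤ M1 + M2 := fun t =>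
    matching_digit_le P Q M1 M2 hM1 hM2 (W t) (hWm t)
  have hxb : ∀ k, |x k| ≤ M1 + M2 := concat_digit_bound W x hWc (M1+M2) hwd
  obtain ⟨c₁, hc₁⟩ := hK₁ne
  obtain ⟨c₂, hc₂⟩ := hK₂ne
  have hclosed : IsClosed (K₁ + K₂) := (hK₁c.add hK₂c).isClosed
  rw [← hclosed.closure_eq, Metric.mem_closure_iff]
  intro ε hε
  set C : ℝ := (M1+M2)/(β-1) + |c₁| + |c₂| with hCdef
  have hC : 0 ≤ C := by positivity
  obtain ⟨t, ht⟩ : ∃ t : ℕ, (C+1) * (1/β)^t < ε := by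
    obtain ⟨t, ht⟩ := exists_pow_lt_of_lt_one (show (0:ℝ) < ε/(C+1) by positivity) hr1
    refine ⟨t, ?_⟩
    have := mul_lt_mul_of_pos_left ht (show (0:ℝ) < C+1 by linarith)
    calc (C+1) * (1/β)^t < (C+1) * (ε/(C+1)) := this
      _ = ε := by field_simp
  obtain ⟨Is, Js, h1, h2, h3⟩ := matching_concat_decomp P Q W hWm t
  have hT : t ≤ (prefixFlat W t).length := prefixFlat_length_ge W hWc.1 t
  refine ⟨(blockVal β (Is.map P).flatten + c₁ / β ^ ((Is.map P).flatten).length)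
    + (blockVal β (Js.map Q).flatten + c₂ / β ^ ((Js.map Q).flatten).length),
    Set.add_mem_add (mem_K_of_blocks β hβ nv hnv a K₁ hK₁ Is c₁ hc₁)
      (mem_K_of_blocks β hβ mv hmv b K₂ hK₂ Js c₂ hc₂), ?_⟩
  rw [Real.dist_eq]
  have hbv : blockVal β (prefixFlat W t)
      = blockVal β (Is.map P).flatten + blockVal β (Js.map Q).flatten := by
    rw [h3]; exact blockVal_zipWith_add β _ _ (h1.trans h2.symm)
  have htr := seqVal_trunc β hβ x (M1+M2) (by linarith) hxb ((prefixFlat W t).length)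
  rw [concat_partial β hβ W x hWc t] at htr
  have hpow : ∀ c : ℝ, c / β ^ ((prefixFlat W t).length)
      = c * (1/β) ^ ((prefixFlat W t).length) := by
    intro c
    rw [div_pow, one_pow, mul_one_div]
  have e1 : seqVal β x - ((blockVal β (Is.map P).flatten + c₁ / β ^ ((Is.map P).flatten).length)
      + (blockVal β (Js.map Q).flatten + c₂ / β ^ ((Js.map Q).flatten).length))
      = (seqVal β x - blockVal β (prefixFlat W t))
        - c₁ * (1/β) ^ ((prefixFlat W t).length) - c₂ * (1/β) ^ ((prefixFlat W t).length) := by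
    rw [hbv, h1, h2, hpow c₁, hpow c₂]
    ring
  rw [e1]
  have hple : (1/β : ℝ) ^ ((prefixFlat W t).length) ≤ (1/β)^t :=
    pow_le_pow_of_le_one hr0 (le_of_lt hr1) hT
  have hpnn : (0:ℝ) ≤ (1/β) ^ ((prefixFlat W t).length) := by positivity
  calc |(seqVal β x - blockVal β (prefixFlat W t))
        - c₁ * (1/β) ^ ((prefixFlat W t).length) - c₂ * (1/β) ^ ((prefixFlat W t).length)|
      ≤ |(seqVal β x - blockVal β (prefixFlat W t))
        - c₁ * (1/β) ^ ((prefixFlat W t).length)| + |c₂ * (1/β) ^ ((prefixFlat W t).length)| :=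
        abs_sub _ _
    _ ≤ |seqVal β x - blockVal β (prefixFlat W t)|
        + |c₁ * (1/β) ^ ((prefixFlat W t).length)| + |c₂ * (1/β) ^ ((prefixFlat W t).length)| :=
        add_le_add_left (abs_sub _ _) _
    _ ≤ (M1+M2)/(β-1) * (1/β) ^ ((prefixFlat W t).length)
        + |c₁| * (1/β) ^ ((prefixFlat W t).length) + |c₂| * (1/β) ^ ((prefixFlat W t).length) := by
        refine add_le_add (add_le_add htr (le_of_eq ?_)) (le_of_eq ?_)
        · rw [abs_mul, abs_of_nonneg hpnn]
        · rw [abs_mul, abs_of_nonneg hpnn]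
    _ = C * (1/β) ^ ((prefixFlat W t).length) := by rw [hCdef]; ring
    _ ≤ C * (1/β) ^ t := mul_le_mul_of_nonneg_left hple hC
    _ < (C+1) * (1/β) ^ t := by
        have : (0:ℝ) < (1/β)^t := by positivity
        nlinarith
    _ < ε := ht
set_option maxHeartbeats 1600000 in
lemma sum_subset_closure_Eset (β : ℝ) (hβ : 1 < β) {n m : ℕ} (hn : 0 < n) (hm : 0 < m)
    (nv : Fin n → ℕ) (hnv : ∀ i, 0 < nv i) (a : Fin n → ℝ)
    (mv : Fin m → ℕ) (hmv : ∀ j, 0 < mv j) (b : Fin m → ℝ)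
    (K₁ K₂ : Set ℝ) (hK₁ne : K₁.Nonempty) (hK₁c : IsCompact K₁)
    (hK₁ : K₁ = ⋃ i : Fin n, (fun x => x / β ^ nv i + a i) '' K₁)
    (hK₂ne : K₂.Nonempty) (hK₂c : IsCompact K₂)
    (hK₂ : K₂ = ⋃ j : Fin m, (fun x => x / β ^ mv j + b j) '' K₂) :
    K₁ + K₂ ⊆ closure (Eset β (fun i => digitBlock β (nv i) (a i))
      (fun j => digitBlock β (mv j) (b j))) := by
  have hβ0 : (0:ℝ) < β := lt_trans one_pos hβ
  have hb1 : (0:ℝ) < β - 1 := by linarith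
  have hr0 : (0:ℝ) ≤ 1/β := by positivity
  have hr1 : 1/β < 1 := by rw [div_lt_one hβ0]; exact hβ
  set P : Fin n → List ℝ := fun i => digitBlock β (nv i) (a i) with hPdef
  set Q : Fin m → List ℝ := fun j => digitBlock β (mv j) (b j) with hQdef
  obtain ⟨M1, hM1n, hM1⟩ := digit_abs_le β hn nv a
  obtain ⟨M2, hM2n, hM2⟩ := digit_abs_le β hm mv b
  obtain ⟨B₁, hB₁⟩ := hK₁c.isBounded.exists_norm_le
  obtain ⟨B₂, hB₂⟩ := hK₂c.isBounded.exists_norm_le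
  have hB₁' : ∀ x ∈ K₁, |x| ≤ B₁ := fun x hx => by
    have := hB₁ x hx; rwa [Real.norm_eq_abs] at this
  have hB₂' : ∀ x ∈ K₂, |x| ≤ B₂ := fun x hx => by
    have := hB₂ x hx; rwa [Real.norm_eq_abs] at this
  have hB₁n : 0 ≤ B₁ := le_trans (abs_nonneg _) (hB₁' _ hK₁ne.choose_spec)
  have hB₂n : 0 ≤ B₂ := le_trans (abs_nonneg _) (hB₂' _ hK₂ne.choose_spec)
  intro z hz
  rw [Set.mem_add] at hz
  obtain ⟨p, hp, q, hq, rfl⟩ := hz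
  rw [Metric.mem_closure_iff]
  intro ε hε
  set C : ℝ := (B₁ + M1/(β-1)) + (B₂ + M2/(β-1)) + (M1+M2)/(β-1) with hCdef
  have hC : 0 ≤ C := by positivity
  obtain ⟨t0, ht0⟩ : ∃ t : ℕ, (C+1) * (1/β)^t < ε := by
    obtain ⟨t, ht⟩ := exists_pow_lt_of_lt_one (show (0:ℝ) < ε/(C+1) by positivity) hr1
    refine ⟨t, ?_⟩
    have := mul_lt_mul_of_pos_left ht (show (0:ℝ) < C+1 by linarith)
    calc (C+1) * (1/β)^t < (C+1) * (ε/(C+1)) := this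
      _ = ε := by field_simp
  set t : ℕ := t0 + 1 with htdef
  have htpos : 0 < t := Nat.succ_pos _
  -- finite codings of p and q
  obtain ⟨isl, hislen, p', hp', hpeq⟩ := exists_code β hβ nv hnv a K₁ hK₁ p hp t
  obtain ⟨jsl, hjslen, q', hq', hqeq⟩ := exists_code β hβ mv hmv b K₂ hK₂ q hq t
  set U : List ℝ := (isl.map P).flatten with hUdef
  set V : List ℝ := (jsl.map Q).flatten with hVdef
  have ht1 : t ≤ U.length := hislen ▸ code_length_ge β nv hnv a isl
  have ht2 : t ≤ V.length := hjslen ▸ code_length_ge β mv hmv b jsl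
  have ht1p : 0 < U.length := lt_of_lt_of_le htpos ht1
  have ht2p : 0 < V.length := lt_of_lt_of_le htpos ht2
  -- extended lists
  set isl' : List (Fin n) := (List.replicate V.length isl).flatten with hisl'def
  set jsl' : List (Fin m) := (List.replicate U.length jsl).flatten with hjsl'def
  set U' : List ℝ := (isl'.map P).flatten with hU'def
  set V' : List ℝ := (jsl'.map Q).flatten with hV'def
  have hU'rep : U' = (List.replicate V.length U).flatten := by
    rw [hU'def, hisl'def, flatten_map_replicate, hUdef]
  have hV'rep : V' = (List.replicate U.length V).flatten := by
    rw [hV'def, hjsl'def, flatten_map_replicate, hVdef]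
  have hU'len : U'.length = V.length * U.length := by
    rw [hU'rep, flatten_replicate_length]
  have hV'len : V'.length = U.length * V.length := by
    rw [hV'rep, flatten_replicate_length]
  set w : List ℝ := List.zipWith (· + ·) U' V' with hwdef
  have hwlen : w.length = U.length * V.length := by
    rw [hwdef, List.length_zipWith, hU'len, hV'len, Nat.mul_comm, Nat.min_self]
  have hwpos : 0 < w.length := by
    rw [hwlen]; exact Nat.mul_pos ht1p ht2p
  have hislne : isl' ≠ [] := by
    apply List.ne_nil_of_length_pos
    rw [hisl'def, flatten_replicate_length]
    have : 0 < isl.length := by omega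
    exact Nat.mul_pos ht2p this
  have hjslne : jsl' ≠ [] := by
    apply List.ne_nil_of_length_pos
    rw [hjsl'def, flatten_replicate_length]
    have : 0 < jsl.length := by omega
    exact Nat.mul_pos ht1p this
  have hwm : IsMatching P Q w :=
    ⟨isl', jsl', hislne, hjslne, by rw [← hU'def, hU'len, hwlen, Nat.mul_comm],
      by rw [← hV'def, hV'len, hwlen], rfl⟩
  -- the periodic sequence
  set x : ℕ → ℝ := fun k => w.getD (k % w.length) 0 with hxdef
  have hwne : w ≠ [] := List.ne_nil_of_length_pos hwpos
  have hconc : IsConcatSeq (fun _ => w) x := by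
    constructor
    · exact fun _ => hwne
    · intro s i
      have hsum : (∑ _u ∈ Finset.range s, w.length) = s * w.length := by
        rw [Finset.sum_const, Finset.card_range, smul_eq_mul]
      rw [hxdef]
      simp only
      rw [hsum, Nat.mul_comm s w.length, Nat.mul_add_mod, Nat.mod_eq_of_lt i.isLt,
        List.getD_eq_getElem _ _ i.isLt, List.get_eq_getElem]
  have hmemE : seqVal β x ∈ Eset β P Q :=
    ⟨x, ⟨fun _ => w, fun _ => hwm, hconc⟩, rfl⟩
  refine ⟨seqVal β x, hmemE, ?_⟩
  -- digit bounds
  have hwd : ∀ c ∈ w, |c| ≤ M1 + M2 := matching_digit_le P Q M1 M2 hM1 hM2 w hwm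
  have hxb : ∀ k, |x k| ≤ M1 + M2 := by
    intro k
    rw [hxdef]
    simp only
    rw [List.getD_eq_getElem _ _ (Nat.mod_lt _ hwpos)]
    exact hwd _ (List.getElem_mem _)
  -- partial sum of x over one period is blockVal w
  have hps : ∑ k ∈ Finset.range w.length, x k / β ^ (k+1) = blockVal β w := by
    rw [blockVal_eq_sum_range]
    apply Finset.sum_congr rfl
    intro k hk
    have hklt : k < w.length := Finset.mem_range.mp hk
    rw [hxdef]
    simp only
    rw [Nat.mod_eq_of_lt hklt]
  have htr := seqVal_trunc β hβ x (M1+M2) (by linarith) hxb w.length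
  rw [hps] at htr
  -- blockVal w = blockVal U' + blockVal V'
  have hbw : blockVal β w = blockVal β U' + blockVal β V' :=
    blockVal_zipWith_add β _ _ (by rw [hU'len, hV'len, Nat.mul_comm])
  -- U' = U ++ R with R having digits ≤ M1
  have hUsplit : ∃ R : List ℝ, U' = U ++ R ∧ ∀ d ∈ R, |d| ≤ M1 := by
    refine ⟨(List.replicate (V.length - 1) U).flatten, ?_, ?_⟩
    · rw [hU'rep]
      have : V.length = (V.length - 1) + 1 := by omega
      rw [this, List.replicate_succ, List.flatten_cons, Nat.add_sub_cancel]
    · intro d hd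
      exact flatten_digit_abs_le P M1 hM1 isl d (hUdef ▸ flatten_replicate_mem _ _ _ hd)
  have hVsplit : ∃ R : List ℝ, V' = V ++ R ∧ ∀ d ∈ R, |d| ≤ M2 := by
    refine ⟨(List.replicate (U.length - 1) V).flatten, ?_, ?_⟩
    · rw [hV'rep]
      have : U.length = (U.length - 1) + 1 := by omega
      rw [this, List.replicate_succ, List.flatten_cons, Nat.add_sub_cancel]
    · intro d hd
      exact flatten_digit_abs_le Q M2 hM2 jsl d (hVdef ▸ flatten_replicate_mem _ _ _ hd)
  obtain ⟨R₁, hR₁, hR₁d⟩ := hUsplit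
  obtain ⟨R₂, hR₂, hR₂d⟩ := hVsplit
  -- |p - blockVal U'| estimate
  have hUest : |p - blockVal β U'| ≤ (B₁ + M1/(β-1)) * (1/β)^t := by
    rw [hR₁, blockVal_append β hβ, hpeq]
    have e : blockVal β U + p' / β ^ U.length - (blockVal β U + blockVal β R₁ / β ^ U.length)
        = (p' - blockVal β R₁) * (1/β) ^ U.length := by
      rw [div_pow, one_pow, mul_one_div]
      ring
    rw [e, abs_mul, abs_of_nonneg (by positivity : (0:ℝ) ≤ (1/β) ^ U.length)]
    have h1 : |p' - blockVal β R₁| ≤ B₁ + M1/(β-1) :=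
      (abs_sub _ _).trans (add_le_add (hB₁' p' hp') (blockVal_abs_le β hβ R₁ M1 hM1n hR₁d))
    have h2 : (1/β : ℝ) ^ U.length ≤ (1/β)^t := pow_le_pow_of_le_one hr0 (le_of_lt hr1) ht1
    exact mul_le_mul h1 h2 (by positivity) (by positivity)
  have hVest : |q - blockVal β V'| ≤ (B₂ + M2/(β-1)) * (1/β)^t := by
    rw [hR₂, blockVal_append β hβ, hqeq]
    have e : blockVal β V + q' / β ^ V.length - (blockVal β V + blockVal β R₂ / β ^ V.length)
        = (q' - blockVal β R₂) * (1/β) ^ V.length := by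
      rw [div_pow, one_pow, mul_one_div]
      ring
    rw [e, abs_mul, abs_of_nonneg (by positivity : (0:ℝ) ≤ (1/β) ^ V.length)]
    have h1 : |q' - blockVal β R₂| ≤ B₂ + M2/(β-1) :=
      (abs_sub _ _).trans (add_le_add (hB₂' q' hq') (blockVal_abs_le β hβ R₂ M2 hM2n hR₂d))
    have h2 : (1/β : ℝ) ^ V.length ≤ (1/β)^t := pow_le_pow_of_le_one hr0 (le_of_lt hr1) ht2
    exact mul_le_mul h1 h2 (by positivity) (by positivity)
  -- tail estimate
  have htw : t ≤ w.length := by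
    rw [hwlen]
    calc t = t * 1 := (Nat.mul_one t).symm
      _ ≤ U.length * V.length := Nat.mul_le_mul ht1 (le_trans htpos ht2)
  have htail : |blockVal β w - seqVal β x| ≤ (M1+M2)/(β-1) * (1/β)^t := by
    rw [abs_sub_comm]
    refine htr.trans ?_
    exact mul_le_mul_of_nonneg_left (pow_le_pow_of_le_one hr0 (le_of_lt hr1) htw)
      (by positivity)
  -- combine
  rw [Real.dist_eq]
  calc |p + q - seqVal β x|
      = |(p - blockVal β U') + (q - blockVal β V') + (blockVal β w - seqVal β x)| := by
        rw [hbw]; ring_nf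
    _ ≤ |(p - blockVal β U') + (q - blockVal β V')| + |blockVal β w - seqVal β x| :=
        abs_add_le _ _
    _ ≤ |p - blockVal β U'| + |q - blockVal β V'| + |blockVal β w - seqVal β x| :=
        add_le_add_left (abs_add_le _ _) _
    _ ≤ (B₁ + M1/(β-1)) * (1/β)^t + (B₂ + M2/(β-1)) * (1/β)^t + (M1+M2)/(β-1) * (1/β)^t :=
        add_le_add (add_le_add hUest hVest) htail
    _ = C * (1/β)^t := by rw [hCdef]; ring
    _ ≤ C * (1/β)^t0 := by
        apply mul_le_mul_of_nonneg_left _ hC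
        exact pow_le_pow_of_le_one hr0 (le_of_lt hr1) (by omega)
    _ < (C+1) * (1/β)^t0 := by
        have : (0:ℝ) < (1/β)^t0 := by positivity
        nlinarith
    _ < ε := ht0
/-- if there are infinitely many Matchings, then the closure of the set `E`
of values of infinite concatenations of Matchings equals `K₁+K₂`. -/
theorem statement3 (β : ℝ) (hβ : 1 < β) (n m : ℕ) (hn : 0 < n) (hm : 0 < m)
    (nv : Fin n → ℕ) (hnv : ∀ i, 0 < nv i) (a : Fin n → ℝ)
    (mv : Fin m → ℕ) (hmv : ∀ j, 0 < mv j) (b : Fin m → ℝ)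
    (K₁ K₂ : Set ℝ)
    (hK₁ne : K₁.Nonempty) (hK₁c : IsCompact K₁)
    (hK₁ : K₁ = ⋃ i : Fin n, (fun x => x / β ^ nv i + a i) '' K₁)
    (hK₂ne : K₂.Nonempty) (hK₂c : IsCompact K₂)
    (hK₂ : K₂ = ⋃ j : Fin m, (fun x => x / β ^ mv j + b j) '' K₂)
    (P : Fin n → List ℝ) (Q : Fin m → List ℝ)
    (hP : P = fun i => digitBlock β (nv i) (a i))
    (hQ : Q = fun j => digitBlock β (mv j) (b j))
    (hinf : {w : List ℝ | IsMatching P Q w}.Infinite) :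
    closure (Eset β P Q) = K₁ + K₂ := by
  subst hP hQ
  apply subset_antisymm
  · exact closure_minimal
      (Eset_subset_sum β hβ hn hm nv hnv a mv hmv b K₁ K₂ hK₁ne hK₁c hK₁ hK₂ne hK₂c hK₂)
      (hK₁c.add hK₂c).isClosed
  · exact sum_subset_closure_Eset β hβ hn hm nv hnv a mv hmv b K₁ K₂ hK₁ne hK₁c hK₁ hK₂ne hK₂c hK₂
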